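/- (Final out-of-distribution estimate for the collapsed sparse model.) Let ε > 0, Δt > 0 and α = 1, and let U, u1, u2, u3, A1, A2 ∈ ℝ satisfy |U·u1 − 1| ≤ ε, Δt·|U·u3 − 1| ≤ ε, Δt·|U·u2·A1 − 1| ≤ ε and Δt·|U·u2·A2 − 1| ≤ 2ε. Let P be a node with V_P > 0, a finite neighbour set N(P) with face areas A_j > 0 and centroid distances δ_j > 0, such that the Fourier condition Δt·Σ_{j∈N(P)} A_j/δ_j ≤ V_P holds and |T_P| ≤ 1, |T_j| ≤ 1 for all j ∈ N(P), |S_P| ≤ 1. Set β_j = (A_j/δ_j)·(T_j − T_P) and define the model output M = U·u1·T_P + U·u2·(Δt/V_P)·( Σ_{j: β_j ≥ 0} A1·β_j + Σ_{j: β_j < 0} A2·β_j ) + U·u3·Δt·S_P. Then |M − F_P| ≤ 2ε·(1 + 2/Δt), where F_P is the first-order finite-volume update. -/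

import Mathlib

open Finset

/-- First-order finite-volume update at a node `P` (with `α = 1`):
`F_P = T_P + (Δt/V_P)·Σ_{j∈N(P)} (A_j/δ_j)·(T_j − T_P) + Δt·S_P`. -/
noncomputable def fvUpdate {ι : Type*} (Δt V_P T_P S_P : ℝ)
    (N : Finset ι) (A δ T : ι → ℝ) : ℝ :=
  T_P + (Δt / V_P) * ∑ j ∈ N, (A j / δ j) * (T j - T_P) + Δt * S_P

/-- **Final out-of-distribution estimate for the collapsed sparse
model.** If `|U·u1 − 1| ≤ ε`, `Δt·|U·u3 − 1| ≤ ε`, `Δt·|U·u2·A1 − 1| ≤ ε`,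
`Δt·|U·u2·A2 − 1| ≤ 2ε`, then at any node satisfying the Fourier condition with
normalized data, the collapsed model
`M = U·u1·T_P + U·u2·(Δt/V_P)·(Σ_{β_j ≥ 0} A1·β_j + Σ_{β_j < 0} A2·β_j) + U·u3·Δt·S_P`
(where `β_j = (A_j/δ_j)·(T_j − T_P)`) satisfies `|M − F_P| ≤ 2ε·(1 + 2/Δt)`. -/
theorem collapsed_model_ood_estimate {ι : Type*} [DecidableEq ι]
    (ε Δt U u1 u2 u3 A1 A2 : ℝ) (hε : 0 < ε) (hΔt : 0 < Δt)
    (hu1 : |U * u1 - 1| ≤ ε)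
    (hu3 : Δt * |U * u3 - 1| ≤ ε)
    (hA1 : Δt * |U * u2 * A1 - 1| ≤ ε)
    (hA2 : Δt * |U * u2 * A2 - 1| ≤ 2 * ε)
    (V_P T_P S_P : ℝ) (hV : 0 < V_P)
    (N : Finset ι) (A δ T : ι → ℝ)
    (hA : ∀ j ∈ N, 0 < A j) (hδ : ∀ j ∈ N, 0 < δ j)
    (hFourier : Δt * ∑ j ∈ N, A j / δ j ≤ V_P)
    (hTP : |T_P| ≤ 1) (hT : ∀ j ∈ N, |T j| ≤ 1) (hSP : |S_P| ≤ 1) :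
    |U * u1 * T_P +
        U * u2 * (Δt / V_P) *
          ((∑ j ∈ N.filter fun j => 0 ≤ (A j / δ j) * (T j - T_P),
              A1 * ((A j / δ j) * (T j - T_P))) +
            ∑ j ∈ N.filter fun j => (A j / δ j) * (T j - T_P) < 0,
              A2 * ((A j / δ j) * (T j - T_P))) +
        U * u3 * (Δt * S_P) -
      fvUpdate Δt V_P T_P S_P N A δ T| ≤ 2 * ε * (1 + 2 / Δt) := by
  set β : ι → ℝ := fun j => (A j / δ j) * (T j - T_P) with hβ
  set sp : ℝ := ∑ j ∈ N.filter fun j => 0 ≤ β j, β j with hsp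
  set sm : ℝ := ∑ j ∈ N.filter fun j => β j < 0, β j with hsm
  -- split of the full sum
  have hsplit : ∑ j ∈ N, β j = sp + sm := by
    rw [hsp, hsm, ← Finset.sum_filter_add_sum_filter_not N (fun j => 0 ≤ β j)]
    congr 1
    apply Finset.sum_congr _ (fun _ _ => rfl)
    apply Finset.filter_congr
    intro j _
    simp [not_le]
  -- rewrite the expression inside |·|
  have hexpr : U * u1 * T_P +
        U * u2 * (Δt / V_P) *
          ((∑ j ∈ N.filter fun j => 0 ≤ (A j / δ j) * (T j - T_P),
              A1 * ((A j / δ j) * (T j - T_P))) +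
            ∑ j ∈ N.filter fun j => (A j / δ j) * (T j - T_P) < 0,
              A2 * ((A j / δ j) * (T j - T_P))) +
        U * u3 * (Δt * S_P) -
      fvUpdate Δt V_P T_P S_P N A δ T
      = (U * u1 - 1) * T_P
        + (Δt / V_P) * ((U * u2 * A1 - 1) * sp + (U * u2 * A2 - 1) * sm)
        + (U * u3 - 1) * (Δt * S_P) := by
    rw [fvUpdate, ← Finset.mul_sum, ← Finset.mul_sum]
    show U * u1 * T_P + U * u2 * (Δt / V_P) * (A1 * sp + A2 * sm) + U * u3 * (Δt * S_P)
        - (T_P + (Δt / V_P) * ∑ j ∈ N, β j + Δt * S_P) = _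
    rw [hsplit]; ring
  rw [hexpr]
  -- individual bounds
  have h1 : |(U * u1 - 1) * T_P| ≤ ε := by
    rw [abs_mul]
    calc |U * u1 - 1| * |T_P| ≤ ε * 1 :=
          mul_le_mul hu1 hTP (abs_nonneg _) (le_of_lt hε)
      _ = ε := mul_one ε
  have h3 : |(U * u3 - 1) * (Δt * S_P)| ≤ ε := by
    rw [abs_mul, abs_mul, abs_of_pos hΔt]
    calc |U * u3 - 1| * (Δt * |S_P|) ≤ |U * u3 - 1| * (Δt * 1) := by
          apply mul_le_mul_of_nonneg_left _ (abs_nonneg _)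
          exact mul_le_mul_of_nonneg_left hSP (le_of_lt hΔt)
      _ = Δt * |U * u3 - 1| := by ring
      _ ≤ ε := hu3
  -- middle bound
  have hCnn : ∀ j ∈ N, (0:ℝ) ≤ A j / δ j := fun j hj =>
    le_of_lt (div_pos (hA j hj) (hδ j hj))
  have hβabs : ∀ j ∈ N, |β j| ≤ 2 * (A j / δ j) := by
    intro j hj
    rw [hβ]
    simp only
    rw [abs_mul, abs_of_nonneg (hCnn j hj)]
    have : |T j - T_P| ≤ 2 := by
      calc |T j - T_P| ≤ |T j| + |T_P| := abs_sub _ _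
        _ ≤ 1 + 1 := add_le_add (hT j hj) hTP
        _ = 2 := by norm_num
    nlinarith [hCnn j hj]
  have habs_sum : |sp| + |sm| ≤ 2 * ∑ j ∈ N, A j / δ j := by
    have h1 : |sp| ≤ ∑ j ∈ N.filter (fun j => 0 ≤ β j), |β j| :=
      Finset.abs_sum_le_sum_abs _ _
    have h2 : |sm| ≤ ∑ j ∈ N.filter (fun j => β j < 0), |β j| :=
      Finset.abs_sum_le_sum_abs _ _
    have hdisj : Disjoint (N.filter fun j => 0 ≤ β j) (N.filter fun j => β j < 0) := by
      rw [Finset.disjoint_left]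
      intro j hj hj'
      simp only [Finset.mem_filter] at hj hj'
      exact absurd hj.2 (not_le.mpr hj'.2)
    have hunion : (N.filter fun j => 0 ≤ β j) ∪ (N.filter fun j => β j < 0) = N := by
      rw [← Finset.filter_or]
      apply Finset.filter_true_of_mem
      intro j _
      exact le_or_gt 0 (β j)
    calc |sp| + |sm| ≤ (∑ j ∈ N.filter (fun j => 0 ≤ β j), |β j|)
          + ∑ j ∈ N.filter (fun j => β j < 0), |β j| := add_le_add h1 h2
      _ = ∑ j ∈ N, |β j| := by rw [← Finset.sum_union hdisj, hunion]
      _ ≤ ∑ j ∈ N, 2 * (A j / δ j) := Finset.sum_le_sum hβabs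
      _ = 2 * ∑ j ∈ N, A j / δ j := by rw [Finset.mul_sum]
  have hA1' : |U * u2 * A1 - 1| ≤ ε / Δt := by
    rw [le_div_iff₀ hΔt]; linarith [hA1, mul_comm Δt |U * u2 * A1 - 1|]
  have hA2' : |U * u2 * A2 - 1| ≤ 2 * ε / Δt := by
    rw [le_div_iff₀ hΔt]; linarith [hA2, mul_comm Δt |U * u2 * A2 - 1|]
  have hC : ∑ j ∈ N, A j / δ j ≤ V_P / Δt := by
    rw [le_div_iff₀ hΔt]; linarith [mul_comm Δt (∑ j ∈ N, A j / δ j)]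
  have h2 : |(Δt / V_P) * ((U * u2 * A1 - 1) * sp + (U * u2 * A2 - 1) * sm)|
      ≤ 4 * ε / Δt := by
    rw [abs_mul, abs_of_pos (div_pos hΔt hV)]
    have hin : |(U * u2 * A1 - 1) * sp + (U * u2 * A2 - 1) * sm|
        ≤ (2 * ε / Δt) * (|sp| + |sm|) := by
      calc |(U * u2 * A1 - 1) * sp + (U * u2 * A2 - 1) * sm|
          ≤ |(U * u2 * A1 - 1) * sp| + |(U * u2 * A2 - 1) * sm| := abs_add_le _ _
        _ = |U * u2 * A1 - 1| * |sp| + |U * u2 * A2 - 1| * |sm| := by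
            rw [abs_mul, abs_mul]
        _ ≤ (2 * ε / Δt) * |sp| + (2 * ε / Δt) * |sm| := by
            apply add_le_add
            · apply mul_le_mul_of_nonneg_right _ (abs_nonneg _)
              calc |U * u2 * A1 - 1| ≤ ε / Δt := hA1'
                _ ≤ 2 * ε / Δt := by gcongr; linarith
            · exact mul_le_mul_of_nonneg_right hA2' (abs_nonneg _)
        _ = (2 * ε / Δt) * (|sp| + |sm|) := by ring
    calc Δt / V_P * |(U * u2 * A1 - 1) * sp + (U * u2 * A2 - 1) * sm|
        ≤ Δt / V_P * ((2 * ε / Δt) * (|sp| + |sm|)) :=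
          mul_le_mul_of_nonneg_left hin (le_of_lt (div_pos hΔt hV))
      _ ≤ Δt / V_P * ((2 * ε / Δt) * (2 * (V_P / Δt))) := by
          apply mul_le_mul_of_nonneg_left _ (le_of_lt (div_pos hΔt hV))
          apply mul_le_mul_of_nonneg_left _ (by positivity)
          calc |sp| + |sm| ≤ 2 * ∑ j ∈ N, A j / δ j := habs_sum
            _ ≤ 2 * (V_P / Δt) := by linarith
      _ = 4 * ε / Δt := by field_simp; ring
  calc |(U * u1 - 1) * T_P
        + (Δt / V_P) * ((U * u2 * A1 - 1) * sp + (U * u2 * A2 - 1) * sm)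
        + (U * u3 - 1) * (Δt * S_P)|
      ≤ |(U * u1 - 1) * T_P
        + (Δt / V_P) * ((U * u2 * A1 - 1) * sp + (U * u2 * A2 - 1) * sm)|
        + |(U * u3 - 1) * (Δt * S_P)| := abs_add_le _ _
    _ ≤ |(U * u1 - 1) * T_P|
        + |(Δt / V_P) * ((U * u2 * A1 - 1) * sp + (U * u2 * A2 - 1) * sm)|
        + |(U * u3 - 1) * (Δt * S_P)| := by
        apply add_le_add_left (abs_add_le _ _)
    _ ≤ ε + 4 * ε / Δt + ε := by
        apply add_le_add (add_le_add h1 h2) h3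
    _ = 2 * ε * (1 + 2 / Δt) := by field_simp; ring
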